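/- For bases Δ and Δ' of Φ and admissible subsets Y ⊆ Δ and Y' ⊆ Δ', the faces F_Y^Δ and F_{Y'}^{Δ'} are either equal or disjoint. -/

import Mathlib

/-!
Common setup for Werner, "Compactifications of Bruhat-Tits buildings associated to
linear representations":  a finite-dimensional real vector space `A` (the apartment),
a root system `Φ` in the dual space together with a Weyl-group invariant inner
product, a finite Weyl-invariant set `Λ` of (K-)weights, and for every basis `Δ`
of `Φ` a highest weight `lam0 Δ ∈ Λ`.
-/

open Pointwise Filter Topology Bornology
open scoped Classical

noncomputable section

/-- A set `M` of linear forms is *connected* if the graph with vertex set `M` and an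
edge between `m` and `n` iff `inn m n ≠ 0` is connected. -/
def GraphConnected {D : Type*} (inn : D → D → ℝ) (M : Set D) : Prop :=
  ∀ m ∈ M, ∀ n ∈ M,
    Relation.ReflTransGen (fun x y => x ∈ M ∧ y ∈ M ∧ inn x y ≠ 0) m n

/-- The coefficients of `μ` as a linear combination of the elements of `Δ` (chosen
arbitrarily if one exists; it is unique when `Δ` is linearly independent). -/
noncomputable def coeffs {A : Type*} [AddCommGroup A] [Module ℝ A]
    (Δ : Finset (Module.Dual ℝ A)) (μ : Module.Dual ℝ A) : Module.Dual ℝ A → ℝ :=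
  if h : ∃ n : Module.Dual ℝ A → ℝ, μ = ∑ b ∈ Δ, n b • b then h.choose else fun _ => 0

/-- The support `[μ]` of `μ` with respect to the basis `Δ`: the set of elements of `Δ`
whose coefficient in `μ` is nonzero. -/
noncomputable def supp {A : Type*} [AddCommGroup A] [Module ℝ A]
    (Δ : Finset (Module.Dual ℝ A)) (μ : Module.Dual ℝ A) : Finset (Module.Dual ℝ A) :=
  Δ.filter fun a => coeffs Δ μ a ≠ 0

/-- Raw data: a finite set `Φ` of roots in the dual of `A`, a product `inn` on the dual,
a finite set `Λ` of weights, and a highest weight `lam0 Δ` for every basis `Δ`. -/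
structure RootWeightData (A : Type*) [NormedAddCommGroup A] [NormedSpace ℝ A]
    [FiniteDimensional ℝ A] where
  Φ : Finset (Module.Dual ℝ A)
  inn : Module.Dual ℝ A → Module.Dual ℝ A → ℝ
  Λ : Finset (Module.Dual ℝ A)
  lam0 : Finset (Module.Dual ℝ A) → Module.Dual ℝ A

namespace RootWeightData

variable {A : Type*} [NormedAddCommGroup A] [NormedSpace ℝ A] [FiniteDimensional ℝ A]
variable (S : RootWeightData A)

/-- The reflection associated to the root `a`. -/
def refl (a : Module.Dual ℝ A) : Function.End (Module.Dual ℝ A) :=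
  fun x => x - (2 * S.inn x a / S.inn a a) • a

/-- The Weyl group `W`, generated by the reflections in the roots. -/
def weyl : Submonoid (Function.End (Module.Dual ℝ A)) :=
  Submonoid.closure {f | ∃ a ∈ S.Φ, f = S.refl a}

/-- `Δ` is a basis of the root system `Φ`: a linearly independent subset of `Φ` such
that every root is a nonnegative or nonpositive linear combination of `Δ`. -/
def IsBase (Δ : Finset (Module.Dual ℝ A)) : Prop :=
  (↑Δ : Set (Module.Dual ℝ A)) ⊆ (S.Φ : Set (Module.Dual ℝ A)) ∧
  LinearIndependent ℝ (fun a : (Δ : Set (Module.Dual ℝ A)) => (a : Module.Dual ℝ A)) ∧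
  ∀ a ∈ S.Φ,
    (∃ n : Module.Dual ℝ A → ℝ, (∀ b ∈ Δ, 0 ≤ n b) ∧ a = ∑ b ∈ Δ, n b • b) ∨
    (∃ n : Module.Dual ℝ A → ℝ, (∀ b ∈ Δ, 0 ≤ n b) ∧ a = -∑ b ∈ Δ, n b • b)

/-- `Y` is an admissible subset of the basis `Δ`: `Y ⊆ Δ` and `Y ∪ {λ₀(Δ)}` is
connected. -/
def Admissible (Δ Y : Finset (Module.Dual ℝ A)) : Prop :=
  Y ⊆ Δ ∧ GraphConnected S.inn ((↑Y : Set (Module.Dual ℝ A)) ∪ {S.lam0 Δ})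

end RootWeightData

/-- The whole setting of Werner's paper: the data of `RootWeightData`, where `Φ` is a
(crystallographic, possibly non-reduced) root system spanning the dual of `A`, `inn` is
a Weyl-invariant inner product, `Λ` is a finite Weyl-invariant set of weights, and
`lam0` picks, Weyl-equivariantly, a highest weight for each basis, dominating all of
`Λ`; moreover a subset of a basis is admissible iff it is the support of
`λ₀(Δ) - λ` for some weight `λ`. -/
structure RootWeightSystem (A : Type*) [NormedAddCommGroup A] [NormedSpace ℝ A]
    [FiniteDimensional ℝ A] extends RootWeightData A where
  inn_symm : ∀ x y, inn x y = inn y x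
  inn_add_left : ∀ x y z, inn (x + y) z = inn x z + inn y z
  inn_smul_left : ∀ (c : ℝ) (x y), inn (c • x) y = c * inn x y
  inn_pos : ∀ x, x ≠ 0 → 0 < inn x x
  root_ne_zero : ∀ a ∈ Φ, a ≠ (0 : Module.Dual ℝ A)
  neg_mem : ∀ a ∈ Φ, -a ∈ Φ
  refl_mem : ∀ a ∈ Φ, ∀ b ∈ Φ, toRootWeightData.refl a b ∈ Φ
  inn_weyl_invariant :
    ∀ w ∈ toRootWeightData.weyl, ∀ x y, inn (w x) (w y) = inn x y
  phi_spans : Submodule.span ℝ (Φ : Set (Module.Dual ℝ A)) = ⊤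
  exists_base : ∃ Δ, toRootWeightData.IsBase Δ
  base_cover : ∀ x : A, ∃ Δ, toRootWeightData.IsBase Δ ∧ ∀ a ∈ Δ, 0 ≤ a x
  base_weyl : ∀ w ∈ toRootWeightData.weyl, ∀ Δ, toRootWeightData.IsBase Δ →
    toRootWeightData.IsBase (Δ.image (w : Module.Dual ℝ A → Module.Dual ℝ A))
  lam0_mem : ∀ Δ, toRootWeightData.IsBase Δ → lam0 Δ ∈ Λ
  lam0_dominates : ∀ Δ, toRootWeightData.IsBase Δ → ∀ l ∈ Λ,
    ∃ n : Module.Dual ℝ A → ℝ, (∀ a ∈ Δ, 0 ≤ n a) ∧ lam0 Δ - l = ∑ a ∈ Δ, n a • a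
  weight_weyl_invariant : ∀ w ∈ toRootWeightData.weyl, ∀ l ∈ Λ, w l ∈ Λ
  lam0_equivariant : ∀ w ∈ toRootWeightData.weyl, ∀ Δ, toRootWeightData.IsBase Δ →
    lam0 (Δ.image (w : Module.Dual ℝ A → Module.Dual ℝ A)) = w (lam0 Δ)
  integrality : ∀ l ∈ Λ, ∀ a ∈ Φ, ∃ k : ℤ, 2 * inn l a / inn a a = (k : ℝ)
  admissible_iff_support : ∀ Δ, toRootWeightData.IsBase Δ → ∀ Y ⊆ Δ,
    (toRootWeightData.Admissible Δ Y ↔ ∃ l ∈ Λ, supp Δ (lam0 Δ - l) = Y)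

namespace RootWeightSystem

variable {A : Type*} [NormedAddCommGroup A] [NormedSpace ℝ A] [FiniteDimensional ℝ A]
variable (S : RootWeightSystem A)

/-- The face `F_Y^Δ` of the apartment `A` associated to a basis `Δ` and an admissible
subset `Y ⊆ Δ`. -/
def Face (Δ Y : Finset (Module.Dual ℝ A)) : Set A :=
  {x | (∀ a ∈ Y, a x = 0) ∧
    ∀ l ∈ S.Λ, ¬ supp Δ (S.lam0 Δ - l) ⊆ Y → 0 < (S.lam0 Δ - l) x}

/-- `F` belongs to the collection `Σ` of faces. -/
def IsFace (F : Set A) : Prop :=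
  ∃ Δ Y, S.toRootWeightData.IsBase Δ ∧ S.toRootWeightData.Admissible Δ Y ∧
    F = S.Face Δ Y

/-- The collection `Σ` of all faces. -/
def Faces : Type _ := {F : Set A // S.IsFace F}

/-- The relation identifying `(F, u)` and `(F, v)` when `u - v ∈ ⟨F⟩`; the quotient is
the disjoint union `Ā = ⊔_{F ∈ Σ} A/⟨F⟩`. -/
def AbarRel (p q : S.Faces × A) : Prop :=
  p.1 = q.1 ∧ p.2 - q.2 ∈ Submodule.span ℝ p.1.val

/-- The compactified apartment `Ā = ⊔_{F ∈ Σ} A_F`, `A_F = A/⟨F⟩`. -/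
def Abar : Type _ := Quot S.AbarRel

/-- `r_F(u)`, the image of `u ∈ A` in the stratum `A_F` of `Ā`. -/
def mkAbar (F : S.Faces) (u : A) : S.Abar := Quot.mk _ (F, u)

/-- The basic set `Γ_F(U) = ⋃_{F' ⊆ cl F} r_{F'}(U + F)` of `Ā`. -/
def Gamma (F : S.Faces) (U : Set A) : Set S.Abar :=
  {p | ∃ F' : S.Faces, F'.val ⊆ closure F.val ∧ ∃ u ∈ U + F.val, p = S.mkAbar F' u}

/-- The topology of `Ā`, generated by the sets `Γ_F(U)` for `F ∈ Σ` and `U ⊆ A`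
bounded and open. -/
instance : TopologicalSpace S.Abar :=
  TopologicalSpace.generateFrom
    {V : Set S.Abar | ∃ (F : S.Faces) (U : Set A),
      IsOpen U ∧ IsBounded U ∧ V = S.Gamma F U}

/-- `f_Ω(a) = inf {t : Ω ⊆ cl_Ā {z ∈ A : a(z) ≥ -t}} ∈ ℝ ∪ {±∞}`, where `A` is embedded
in `Ā` as the stratum of the face `F₀ = {0}`. -/
def fOmega (F₀ : S.Faces) (Ω : Set S.Abar) (a : Module.Dual ℝ A) : EReal :=
  sInf ((fun t : ℝ => (t : EReal)) ''
    {t : ℝ | Ω ⊆ closure (S.mkAbar F₀ '' {z : A | -t ≤ a z})})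

end RootWeightSystem


variable {A : Type*} [NormedAddCommGroup A] [NormedSpace ℝ A] [FiniteDimensional ℝ A]

namespace RootWeightSystem

lemma coeffs_eq_of_li {A : Type*} [AddCommGroup A] [Module ℝ A]
    {Δ : Finset (Module.Dual ℝ A)}
    (hli : LinearIndependent ℝ (fun a : (Δ : Set (Module.Dual ℝ A)) => (a : Module.Dual ℝ A)))
    {μ : Module.Dual ℝ A} {n : Module.Dual ℝ A → ℝ}
    (h : μ = ∑ b ∈ Δ, n b • b) : ∀ b ∈ Δ, coeffs Δ μ b = n b := by
  intro b hb
  have hex : ∃ n : Module.Dual ℝ A → ℝ, μ = ∑ b ∈ Δ, n b • b := ⟨n, h⟩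
  have hspec : μ = ∑ b ∈ Δ, hex.choose b • b := hex.choose_spec
  have hc : coeffs Δ μ = hex.choose := by rw [coeffs, dif_pos hex]
  rw [hc]
  have hsum : ∑ c ∈ Δ, (hex.choose c - n c) • c = 0 := by
    have : ∀ c ∈ Δ, (hex.choose c - n c) • c = hex.choose c • c - n c • c :=
      fun c _ => sub_smul (hex.choose c) (n c) c
    rw [Finset.sum_congr rfl this, Finset.sum_sub_distrib, ← hspec, ← h, sub_self]
  have hsum2 : ∑ i ∈ Δ.attach, (hex.choose i.1 - n i.1) • (i.1 : Module.Dual ℝ A) = 0 := by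
    rw [Finset.sum_attach Δ (fun c => (hex.choose c - n c) • c)]; exact hsum
  have key := linearIndependent_iff'.mp hli Δ.attach (fun i => hex.choose i.1 - n i.1) hsum2
    ⟨b, hb⟩ (Finset.mem_attach _ _)
  have : hex.choose b - n b = 0 := key
  linarith

variable {A : Type*} [NormedAddCommGroup A] [NormedSpace ℝ A] [FiniteDimensional ℝ A]
variable (S : RootWeightSystem A)

/-- The dominance representation: the coefficients of `lam0 Δ - l` are nonnegative and
represent it. -/
lemma dom_repr {Δ : Finset (Module.Dual ℝ A)} (hΔ : S.toRootWeightData.IsBase Δ)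
    {l : Module.Dual ℝ A} (hl : l ∈ S.Λ) :
    (∀ a ∈ Δ, 0 ≤ coeffs Δ (S.lam0 Δ - l) a) ∧
      S.lam0 Δ - l = ∑ a ∈ Δ, coeffs Δ (S.lam0 Δ - l) a • a := by
  obtain ⟨n, hn0, hn⟩ := S.lam0_dominates Δ hΔ l hl
  have hco := coeffs_eq_of_li hΔ.2.1 hn
  constructor
  · intro a ha; rw [hco a ha]; exact hn0 a ha
  · calc S.lam0 Δ - l = ∑ a ∈ Δ, n a • a := hn
      _ = ∑ a ∈ Δ, coeffs Δ (S.lam0 Δ - l) a • a :=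
        Finset.sum_congr rfl fun a ha => by rw [hco a ha]

set_option linter.unusedSectionVars false in
lemma eval_sum (Δ : Finset (Module.Dual ℝ A)) (c : Module.Dual ℝ A → ℝ) (y : A) :
    (∑ a ∈ Δ, c a • a) y = ∑ a ∈ Δ, c a * a y := by
  simp [LinearMap.sum_apply, LinearMap.smul_apply, smul_eq_mul]

/-- Lemma A: if `y` vanishes on `Y` and the support of `lam0 Δ - l` lies in `Y` then
`(lam0 Δ - l) y = 0`. -/
lemma eval_zero_of_supp_subset {Δ Y : Finset (Module.Dual ℝ A)}
    (hΔ : S.toRootWeightData.IsBase Δ) {l : Module.Dual ℝ A} (hl : l ∈ S.Λ)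
    {y : A} (hy : ∀ a ∈ Y, a y = 0) (hsub : supp Δ (S.lam0 Δ - l) ⊆ Y) :
    (S.lam0 Δ - l) y = 0 := by
  obtain ⟨-, hrepr⟩ := S.dom_repr hΔ hl
  rw [hrepr, eval_sum]
  refine Finset.sum_eq_zero fun a ha => ?_
  by_cases hc : coeffs Δ (S.lam0 Δ - l) a = 0
  · rw [hc, zero_mul]
  · have : a ∈ supp Δ (S.lam0 Δ - l) := Finset.mem_filter.mpr ⟨ha, hc⟩
    rw [hy a (hsub this), mul_zero]

/-- Lemma B: if the support of `lam0 Δ - l` is `Z`, `m ∈ Z`, `y` kills every other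
element of `Z`, and `(lam0 Δ - l) y = 0`, then `m y = 0`. -/
lemma eval_single {Δ Z : Finset (Module.Dual ℝ A)}
    (hΔ : S.toRootWeightData.IsBase Δ) {l : Module.Dual ℝ A} (hl : l ∈ S.Λ)
    (hsupp : supp Δ (S.lam0 Δ - l) = Z) {m : Module.Dual ℝ A} (hm : m ∈ Z)
    {y : A} (hy : ∀ b ∈ Z, b ≠ m → b y = 0) (h0 : (S.lam0 Δ - l) y = 0) :
    m y = 0 := by
  obtain ⟨-, hrepr⟩ := S.dom_repr hΔ hl
  have hmΔ : m ∈ Δ := by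
    have := hsupp ▸ hm; exact (Finset.mem_filter.mp this).1
  have hsum : ∑ a ∈ Δ, coeffs Δ (S.lam0 Δ - l) a * a y = 0 := by
    rw [← eval_sum, ← hrepr]; exact h0
  have hrest : ∀ a ∈ Δ, a ≠ m → coeffs Δ (S.lam0 Δ - l) a * a y = 0 := by
    intro a ha ham
    by_cases hc : coeffs Δ (S.lam0 Δ - l) a = 0
    · rw [hc, zero_mul]
    · have : a ∈ Z := hsupp ▸ Finset.mem_filter.mpr ⟨ha, hc⟩
      rw [hy a this ham, mul_zero]
  have hone : coeffs Δ (S.lam0 Δ - l) m * m y = 0 := by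
    have := Finset.sum_eq_single_of_mem m hmΔ (fun a ha ham => hrest a ha ham)
    rw [this] at hsum; exact hsum
  have hcm : coeffs Δ (S.lam0 Δ - l) m ≠ 0 := by
    have := hsupp ▸ hm
    exact (Finset.mem_filter.mp this).2
  exact (mul_eq_zero.mp hone).resolve_left hcm

/-- The edge relation is monotone in the set and symmetric-transitive-friendly. -/
lemma graphConnected_insert {D : Type*} (inn : D → D → ℝ)
    (hsymm : ∀ x y, inn x y = inn y x)
    {M : Set D} {lam0 c m : D} (hconn : GraphConnected inn (M ∪ {lam0}))
    (hm : m ∈ M ∪ {lam0}) (hedge : inn m c ≠ 0) :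
    GraphConnected inn (insert c M ∪ {lam0}) := by
  set M' : Set D := insert c M ∪ {lam0} with hM'
  have hsubset : M ∪ {lam0} ⊆ M' := by
    intro x hx
    rcases hx with hx | hx
    · exact Or.inl (Set.mem_insert_of_mem _ hx)
    · exact Or.inr hx
  have hmono : ∀ x y, (x ∈ M ∪ {lam0} ∧ y ∈ M ∪ {lam0} ∧ inn x y ≠ 0) →
      (x ∈ M' ∧ y ∈ M' ∧ inn x y ≠ 0) :=
    fun x y ⟨h1, h2, h3⟩ => ⟨hsubset h1, hsubset h2, h3⟩
  have hsym : Symmetric fun x y => x ∈ M' ∧ y ∈ M' ∧ inn x y ≠ 0 := by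
    intro x y ⟨h1, h2, h3⟩
    exact ⟨h2, h1, by rw [hsymm]; exact h3⟩
  have hcM' : c ∈ M' := Or.inl (Set.mem_insert _ _)
  -- everything in M' reaches lam0
  have hreach : ∀ p ∈ M', Relation.ReflTransGen
      (fun x y => x ∈ M' ∧ y ∈ M' ∧ inn x y ≠ 0) p lam0 := by
    have hlam : lam0 ∈ M ∪ {lam0} := Or.inr rfl
    have hold : ∀ p ∈ M ∪ {lam0}, Relation.ReflTransGen
        (fun x y => x ∈ M' ∧ y ∈ M' ∧ inn x y ≠ 0) p lam0 := by
      intro p hp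
      exact Relation.ReflTransGen.mono hmono _ _ (hconn p hp lam0 hlam)
    intro p hp
    rcases hp with hp | hp
    · rcases Set.mem_insert_iff.mp hp with hp | hp
      · subst hp
        refine Relation.ReflTransGen.head ⟨hcM', hsubset hm, by rw [hsymm]; exact hedge⟩ ?_
        exact hold m hm
      · exact hold p (Or.inl hp)
    · exact hold p (Or.inr hp)
  intro p hp q hq
  exact (hreach p hp).trans ((@Relation.ReflTransGen.symmetric _ _ ⟨fun _ _ h => hsym h⟩).symm _ _ (hreach q hq))

/-- Extension step: from a zero set `Z` and a new admissibly-connected element `c ∈ Y`,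
conclude `c y = 0`. -/
lemma extend_zero {Δ Y Z : Finset (Module.Dual ℝ A)}
    (hΔ : S.toRootWeightData.IsBase Δ) (hYΔ : Y ⊆ Δ)
    {c : Module.Dual ℝ A} (hcY : c ∈ Y) (hZY : Z ⊆ Y)
    (hconn : GraphConnected S.inn (↑(insert c Z) ∪ {S.lam0 Δ}))
    {y : A} (hZzero : ∀ b ∈ Z, b y = 0)
    (hz : ∀ l ∈ S.Λ, supp Δ (S.lam0 Δ - l) ⊆ Y → (S.lam0 Δ - l) y = 0) :
    c y = 0 := by
  have hZ'Y : insert c Z ⊆ Y := Finset.insert_subset hcY hZY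
  have hZ'Δ : insert c Z ⊆ Δ := hZ'Y.trans hYΔ
  have hadm : S.toRootWeightData.Admissible Δ (insert c Z) := ⟨hZ'Δ, hconn⟩
  obtain ⟨l, hl, hsupp⟩ := (S.admissible_iff_support Δ hΔ (insert c Z) hZ'Δ).mp hadm
  have h0 : (S.lam0 Δ - l) y = 0 := hz l hl (hsupp ▸ hZ'Y)
  refine S.eval_single hΔ hl hsupp (Finset.mem_insert_self c Z) ?_ h0
  intro b hb hbc
  rcases Finset.mem_insert.mp hb with h | h
  · exact absurd h hbc
  · exact hZzero b h

/-- Connectivity propagation: if all `lam0 Δ - l` with support in `Y` kill `y`, then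
`y` kills all of `Y`. -/
lemma zero_on_Y {Δ Y : Finset (Module.Dual ℝ A)}
    (hΔ : S.toRootWeightData.IsBase Δ) (hY : S.toRootWeightData.Admissible Δ Y)
    {y : A} (hz : ∀ l ∈ S.Λ, supp Δ (S.lam0 Δ - l) ⊆ Y → (S.lam0 Δ - l) y = 0) :
    ∀ a ∈ Y, a y = 0 := by
  intro a haY
  set M : Set (Module.Dual ℝ A) := (↑Y : Set (Module.Dual ℝ A)) ∪ {S.lam0 Δ} with hM
  have hlamM : S.lam0 Δ ∈ M := Or.inr rfl
  have haM : a ∈ M := Or.inl (Finset.mem_coe.mpr haY)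
  have hpath := hY.2 (S.lam0 Δ) hlamM a haM
  -- invariant along the path
  have key : ∀ m, Relation.ReflTransGen
      (fun x y => x ∈ M ∧ y ∈ M ∧ S.inn x y ≠ 0) (S.lam0 Δ) m →
      ∃ Z : Finset (Module.Dual ℝ A), Z ⊆ Y ∧
        GraphConnected S.inn (↑Z ∪ {S.lam0 Δ}) ∧ (∀ b ∈ Z, b y = 0) ∧
        (m ∈ Z ∨ m = S.lam0 Δ) := by
    intro m h
    induction h with
    | refl =>
        refine ⟨∅, Finset.empty_subset _, ?_, fun b hb => absurd hb (Finset.notMem_empty b),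
          Or.inr rfl⟩
        intro p hp q hq
        simp only [Finset.coe_empty, Set.empty_union, Set.mem_singleton_iff] at hp hq
        subst hp; subst hq; exact Relation.ReflTransGen.refl
    | tail _ hedge ih =>
        obtain ⟨Z, hZY, hZconn, hZzero, hmem⟩ := ih
        rename_i b c _
        obtain ⟨hbM, hcM, hbc⟩ := hedge
        by_cases hcZ : c ∈ Z
        · exact ⟨Z, hZY, hZconn, hZzero, Or.inl hcZ⟩
        by_cases hclam : c = S.lam0 Δ
        · exact ⟨Z, hZY, hZconn, hZzero, Or.inr hclam⟩
        have hcY : c ∈ Y := by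
          rcases hcM with h | h
          · exact Finset.mem_coe.mp h
          · exact absurd h hclam
        have hbM' : b ∈ (↑Z : Set (Module.Dual ℝ A)) ∪ {S.lam0 Δ} := by
          rcases hmem with h | h
          · exact Or.inl (Finset.mem_coe.mpr h)
          · exact Or.inr h
        have hconn' : GraphConnected S.inn (↑(insert c Z) ∪ {S.lam0 Δ}) := by
          have := graphConnected_insert S.inn S.inn_symm hZconn hbM' hbc
          simpa [Finset.coe_insert] using this
        have hczero : c y = 0 := S.extend_zero hΔ hY.1 hcY hZY hconn' hZzero hz
        exact ⟨insert c Z, Finset.insert_subset hcY hZY, hconn',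
          fun b' hb' => (Finset.mem_insert.mp hb').elim (fun h => h ▸ hczero)
            (fun h => hZzero b' h), Or.inl (Finset.mem_insert_self c Z)⟩
  obtain ⟨Z, hZY, hZconn, hZzero, hmem⟩ := key a hpath
  rcases hmem with h | h
  · exact hZzero a h
  · -- a = lam0 Δ ∈ Y; extend Z by a
    have hconn' : GraphConnected S.inn (↑(insert a Z) ∪ {S.lam0 Δ}) := by
      have : (↑(insert a Z) : Set (Module.Dual ℝ A)) ∪ {S.lam0 Δ}
          = (↑Z : Set (Module.Dual ℝ A)) ∪ {S.lam0 Δ} := by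
        subst h
        ext x
        simp only [Finset.coe_insert, Set.mem_union, Set.mem_insert_iff,
          Set.mem_singleton_iff, Finset.mem_coe]
        tauto
      rw [this]; exact hZconn
    exact S.extend_zero hΔ hY.1 haY hZY hconn' hZzero hz

/-- The intrinsic description of the face. -/
lemma mem_face_iff {Δ Y : Finset (Module.Dual ℝ A)}
    (hΔ : S.toRootWeightData.IsBase Δ) (hY : S.toRootWeightData.Admissible Δ Y) (y : A) :
    y ∈ S.Face Δ Y ↔ ∀ l ∈ S.Λ,
      (supp Δ (S.lam0 Δ - l) ⊆ Y → (S.lam0 Δ - l) y = 0) ∧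
      (¬ supp Δ (S.lam0 Δ - l) ⊆ Y → 0 < (S.lam0 Δ - l) y) := by
  constructor
  · rintro ⟨h1, h2⟩ l hl
    exact ⟨fun hsub => S.eval_zero_of_supp_subset hΔ hl h1 hsub, fun hsub => h2 l hl hsub⟩
  · intro H
    refine ⟨?_, fun l hl hsub => (H l hl).2 hsub⟩
    exact S.zero_on_Y hΔ hY (fun l hl hsub => (H l hl).1 hsub)

end RootWeightSystem


/-- For bases `Δ`, `Δ'` of `Φ` and admissible subsets `Y ⊆ Δ`,
`Y' ⊆ Δ'`, the faces `F_Y^Δ` and `F_{Y'}^{Δ'}` are either equal or disjoint. -/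
theorem face_eq_or_disjoint (S : RootWeightSystem A)
    (Δ Δ' Y Y' : Finset (Module.Dual ℝ A))
    (hΔ : S.toRootWeightData.IsBase Δ) (hΔ' : S.toRootWeightData.IsBase Δ')
    (hY : S.toRootWeightData.Admissible Δ Y)
    (hY' : S.toRootWeightData.Admissible Δ' Y') :
    S.Face Δ Y = S.Face Δ' Y' ∨ Disjoint (S.Face Δ Y) (S.Face Δ' Y') := by
  by_cases hdis : Disjoint (S.Face Δ Y) (S.Face Δ' Y')
  · exact Or.inr hdis
  left
  obtain ⟨x, hx, hx'⟩ := Set.not_disjoint_iff.mp hdis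
  have hl0 : S.lam0 Δ ∈ S.Λ := S.lam0_mem Δ hΔ
  have hl0' : S.lam0 Δ' ∈ S.Λ := S.lam0_mem Δ' hΔ'
  have hxE := (S.mem_face_iff hΔ hY x).mp hx
  have hx'E := (S.mem_face_iff hΔ' hY' x).mp hx'
  have hanti : (S.lam0 Δ - S.lam0 Δ') x = -((S.lam0 Δ' - S.lam0 Δ) x) := by
    simp [LinearMap.sub_apply]
  have h0 : (S.lam0 Δ - S.lam0 Δ') x = 0 := by
    obtain ⟨hz1, hp1⟩ := hxE (S.lam0 Δ') hl0'
    obtain ⟨hz2, hp2⟩ := hx'E (S.lam0 Δ) hl0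
    by_cases hs : supp Δ (S.lam0 Δ - S.lam0 Δ') ⊆ Y
    · exact hz1 hs
    by_cases hs' : supp Δ' (S.lam0 Δ' - S.lam0 Δ) ⊆ Y'
    · have h := hz2 hs'
      rw [hanti, h, neg_zero]
    · have h1 := hp1 hs
      have h2 := hp2 hs'
      rw [hanti] at h1
      linarith
  have hsY : supp Δ (S.lam0 Δ - S.lam0 Δ') ⊆ Y := by
    by_contra h
    have := (hxE _ hl0').2 h
    rw [h0] at this
    exact lt_irrefl 0 this
  have hsY' : supp Δ' (S.lam0 Δ' - S.lam0 Δ) ⊆ Y' := by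
    by_contra h
    have hpos := (hx'E _ hl0).2 h
    rw [hanti] at h0
    have h0' : (S.lam0 Δ' - S.lam0 Δ) x = 0 := by linarith
    rw [h0'] at hpos
    exact lt_irrefl 0 hpos
  have hiff : ∀ l ∈ S.Λ, (supp Δ (S.lam0 Δ - l) ⊆ Y ↔ supp Δ' (S.lam0 Δ' - l) ⊆ Y') := by
    intro l hl
    have harith : (S.lam0 Δ' - l) x = (S.lam0 Δ - l) x - (S.lam0 Δ - S.lam0 Δ') x := by
      simp [LinearMap.sub_apply]
    constructor
    · intro hs
      have hz := (hxE l hl).1 hs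
      by_contra h
      have hpos := (hx'E l hl).2 h
      rw [harith, hz, h0] at hpos
      simp at hpos
    · intro hs
      have hz := (hx'E l hl).1 hs
      by_contra h
      have hpos := (hxE l hl).2 h
      rw [harith, h0, sub_zero] at hz
      rw [hz] at hpos
      exact lt_irrefl 0 hpos
  have incl : ∀ (Δ₁ Y₁ Δ₂ Y₂ : Finset (Module.Dual ℝ A)),
      S.toRootWeightData.IsBase Δ₁ → S.toRootWeightData.IsBase Δ₂ →
      S.toRootWeightData.Admissible Δ₁ Y₁ → S.toRootWeightData.Admissible Δ₂ Y₂ →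
      supp Δ₁ (S.lam0 Δ₁ - S.lam0 Δ₂) ⊆ Y₁ →
      (∀ l ∈ S.Λ, (supp Δ₁ (S.lam0 Δ₁ - l) ⊆ Y₁ ↔ supp Δ₂ (S.lam0 Δ₂ - l) ⊆ Y₂)) →
      S.Face Δ₁ Y₁ ⊆ S.Face Δ₂ Y₂ := by
    intro Δ₁ Y₁ Δ₂ Y₂ h₁ h₂ hA₁ hA₂ hsupp hif y hy
    have hyE := (S.mem_face_iff h₁ hA₁ y).mp hy
    rw [S.mem_face_iff h₂ hA₂ y]
    have h0y : (S.lam0 Δ₁ - S.lam0 Δ₂) y = 0 := (hyE _ (S.lam0_mem Δ₂ h₂)).1 hsupp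
    intro l hl
    have harith : (S.lam0 Δ₂ - l) y = (S.lam0 Δ₁ - l) y - (S.lam0 Δ₁ - S.lam0 Δ₂) y := by
      simp [LinearMap.sub_apply]
    constructor
    · intro hs
      have hz := (hyE l hl).1 ((hif l hl).mpr hs)
      rw [harith, hz, h0y, sub_zero]
    · intro hs
      have hpos := (hyE l hl).2 (fun hh => hs ((hif l hl).mp hh))
      rw [harith, h0y, sub_zero]
      exact hpos
  exact Set.Subset.antisymm
    (incl Δ Y Δ' Y' hΔ hΔ' hY hY' hsY hiff)
    (incl Δ' Y' Δ Y hΔ' hΔ hY' hY hsY' (fun l hl => (hiff l hl).symm))
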